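/- Let f: ℝ^d → ℝ be concave with hypograph f⁻ = {(x, z) : z ≤ f(x)}, and for x ∈ f⁻ let ray(x) = f(π(x)) − z(x) be the length of the vertical ray from x up to the boundary of f⁻ (where π is projection onto ℝ^d and z the last coordinate). Then for 0 ≤ λ < 1 and any y ∈ M^λ_{f⁻}(x), one has (1 − λ)·ray(x) ≤ ray(y) ≤ (1 + λ)·ray(x). -/

import Mathlib

theorem macbeath_ray_distance {d : ℕ} (f : EuclideanSpace ℝ (Fin d) → ℝ)
    (hconc : ConcaveOn ℝ Set.univ f)
    (F : Set (EuclideanSpace ℝ (Fin d) × ℝ))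
    (hF : F = {p | p.2 ≤ f p.1})
    (ray : EuclideanSpace ℝ (Fin d) × ℝ → ℝ)
    (hray : ∀ p, ray p = f p.1 - p.2)
    (lam : ℝ) (hlam0 : 0 ≤ lam) (hlam1 : lam < 1)
    (x : EuclideanSpace ℝ (Fin d) × ℝ) (hx : x ∈ F)
    (y : EuclideanSpace ℝ (Fin d) × ℝ)
    (hy : ∃ z, y = x + lam • z ∧ x + z ∈ F ∧ x - z ∈ F) :
    (1 - lam) * ray x ≤ ray y ∧ ray y ≤ (1 + lam) * ray x := by
  obtain ⟨z, hyz, hpz, hmz⟩ := hy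
  rw [hF] at hx hpz hmz
  have hx2 : x.2 ≤ f x.1 := hx
  have hp : x.2 + z.2 ≤ f (x.1 + z.1) := hpz
  have hm : x.2 - z.2 ≤ f (x.1 - z.1) := hmz
  have hy1 : y.1 = x.1 + lam • z.1 := by rw [hyz]; rfl
  have hy2 : y.2 = x.2 + lam * z.2 := by rw [hyz]; rfl
  have hpos : (0:ℝ) < 1 + lam := by linarith
  have hlow := hconc.2 (Set.mem_univ x.1) (Set.mem_univ (x.1 + z.1))
    (by linarith : (0:ℝ) ≤ 1 - lam) hlam0 (by ring)
  have hcomb : (1 - lam) • x.1 + lam • (x.1 + z.1) = x.1 + lam • z.1 := by module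
  rw [hcomb] at hlow
  have hupp := hconc.2 (Set.mem_univ (x.1 + lam • z.1)) (Set.mem_univ (x.1 - z.1))
    (le_of_lt (by positivity : (0:ℝ) < 1/(1+lam)))
    (by positivity : (0:ℝ) ≤ lam/(1+lam)) (by field_simp)
  have hcomb2 : (1/(1+lam)) • (x.1 + lam • z.1) + (lam/(1+lam)) • (x.1 - z.1) = x.1 := by
    match_scalars <;> field_simp <;> ring
  rw [hcomb2] at hupp
  simp only [smul_eq_mul] at hlow hupp
  have hupp' : f (x.1 + lam • z.1) + lam * f (x.1 - z.1) ≤ (1 + lam) * f x.1 := by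
    have h := mul_le_mul_of_nonneg_left hupp hpos.le
    have hne : (1:ℝ) + lam ≠ 0 := hpos.ne'
    calc f (x.1 + lam • z.1) + lam * f (x.1 - z.1)
        = (1 + lam) * (1/(1+lam) * f (x.1 + lam • z.1) + lam/(1+lam) * f (x.1 - z.1)) := by
          field_simp
      _ ≤ (1 + lam) * f x.1 := h
  constructor
  · rw [hray, hray, hy1, hy2]; nlinarith
  · rw [hray, hray, hy1, hy2]; nlinarith
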